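/- arXiv:2603.21595 — 3 statements merged into one kernel-verified Lean document; each statement's English description precedes it below -/
import Mathlib

section
/- Let H be a Hermitian d×d complex matrix, A a d×d complex matrix, and s ∈ ℝ. Let f : ℝ → ℂ be continuous and integrable, with Fourier transform f̂(ω) = ∫_ℝ f(t) e^{−iωt} dt satisfying |f̂(ω)| ≤ C e^{−γ|ω|} for some constants C > 0 and γ > |s|. Define f̃(t) = (1/2π) ∫_ℝ f̂(ω) e^{−ωs + iωt} dω, and assume f̃ is integrable and continuous. Then e^{sH} A_f e^{−sH} = A_{f̃}, and moreover ‖A_{f̃}‖ ≤ ‖A‖ · ∫_ℝ |f̃(t)| dt. -/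
open scoped Matrix.Norms.L2Operator ComplexOrder Classical
open MeasureTheory Real Matrix

/-- Matrix exponential. -/
noncomputable def mexp {d : ℕ} (M : Matrix (Fin d) (Fin d) ℂ) : Matrix (Fin d) (Fin d) ℂ :=
  NormedSpace.exp M

/-- The filtered operator `A_g = ∫ g(t) e^{iHt} A e^{-iHt} dt`. -/
noncomputable def filtered {d : ℕ} (H : Matrix (Fin d) (Fin d) ℂ) (g : ℝ → ℂ)
    (A : Matrix (Fin d) (Fin d) ℂ) : Matrix (Fin d) (Fin d) ℂ :=
  ∫ t : ℝ, g t • (mexp ((Complex.I * t) • H) * A * mexp ((-(Complex.I * t)) • H))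

/-- Fourier transform `f̂(ω) = ∫ f(t) e^{-iωt} dt`. -/
noncomputable def fourierT (f : ℝ → ℂ) (ω : ℝ) : ℂ :=
  ∫ t : ℝ, f t * Complex.exp (-(Complex.I * ω * t))


open scoped FourierTransform
open Set

-- integrability of two-sided exponential decay
lemma integrable_exp_neg_mul_abs' {b : ℝ} (hb : 0 < b) :
    Integrable (fun x : ℝ => Real.exp (-b * |x|)) := by
  have A : MeasurableEmbedding fun x : ℝ => -x :=
    (Homeomorph.neg ℝ).isClosedEmbedding.measurableEmbedding
  have h1 : IntegrableOn (fun x : ℝ => Real.exp (-b * |x|)) (Ioi 0) := by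
    refine (exp_neg_integrableOn_Ioi 0 hb).congr_fun (fun x hx => ?_) measurableSet_Ioi
    rw [abs_of_pos hx]
  have h2 : IntegrableOn (fun x : ℝ => Real.exp (-b * |x|)) (Iic 0) := by
    rw [IntegrableOn, ← Measure.map_neg_eq_self (volume : Measure ℝ), A.restrict_map,
      A.integrable_map_iff]
    have : ((fun x : ℝ => -x) ⁻¹' Iic 0) = Ici 0 := by ext x; simp
    rw [this]
    refine ((integrableOn_Ici_iff_integrableOn_Ioi).mpr h1).congr_fun (fun x hx => ?_)
      measurableSet_Ici
    simp [abs_neg]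
  have := h2.union h1
  rwa [Iic_union_Ioi, integrableOn_univ] at this

lemma fourierT_eq_F (f : ℝ → ℂ) (ω : ℝ) : fourierT f ω = 𝓕 f (ω / (2 * π)) := by
  rw [fourierT, Real.fourier_real_eq_integral_exp_smul]
  refine MeasureTheory.integral_congr_ae (Filter.Eventually.of_forall fun t => ?_)
  show f t * Complex.exp (-(Complex.I * ω * t))
      = Complex.exp (((-2 * π * t * (ω / (2 * π)) : ℝ) : ℂ) * Complex.I) • f t
  rw [smul_eq_mul, mul_comm]
  congr 2
  have hπ : (π : ℝ) ≠ 0 := Real.pi_ne_zero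
  have : (-2 * π * t * (ω / (2 * π)) : ℝ) = -(ω * t) := by field_simp
  rw [this]
  push_cast
  ring

lemma fourierT_continuous {f : ℝ → ℂ} (hf : Integrable f) : Continuous (fourierT f) := by
  have h : Continuous (𝓕 f) :=
    VectorFourier.fourierIntegral_continuous Real.continuous_fourierChar continuous_inner hf
  have : fourierT f = fun ω => 𝓕 f (ω / (2 * π)) := funext fun ω => fourierT_eq_F f ω
  rw [this]
  fun_prop

lemma key_inversion {g ftilde : ℝ → ℂ}
    (hgc : Continuous g) (hgi : Integrable g)
    (hft : ∀ t : ℝ, ftilde t = (1 / (2 * π) : ℝ) * ∫ μ : ℝ, g μ * Complex.exp (Complex.I * μ * t))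
    (hfti : Integrable ftilde) (ω : ℝ) :
    ∫ t : ℝ, ftilde t * Complex.exp (-(Complex.I * ω * t)) = g ω := by
  have hπ : (π : ℝ) ≠ 0 := Real.pi_ne_zero
  have h2π : (2 * π : ℝ) ≠ 0 := by positivity
  have h2πc : (2 * (π : ℂ)) ≠ 0 := by exact_mod_cast h2π
  -- step 1 : 𝓕⁻ g u = 2π ftilde (2π u)
  have hrel : ∀ u : ℝ, 𝓕⁻ g u = ((2 * π : ℝ) : ℂ) * ftilde (2 * π * u) := by
    intro u
    rw [Real.fourierInv_eq_fourier_neg,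
      Real.fourier_real_eq_integral_exp_smul, hft, ← mul_assoc,
      show ((2 * π : ℝ) : ℂ) * ((1 / (2 * π) : ℝ) : ℂ) = 1 by
        push_cast; rw [mul_one_div, div_self h2πc], one_mul]
    refine integral_congr_ae (Filter.Eventually.of_forall fun v => ?_)
    dsimp only
    rw [smul_eq_mul, mul_comm]
    congr 1
    push_cast
    ring
  -- step 2 : integrability of 𝓕⁻ g and 𝓕 g
  have hinv_int : Integrable (𝓕⁻ g) := by
    have h1 : Integrable fun u : ℝ => ftilde (2 * π * u) := hfti.comp_mul_left' h2π
    have h2 : Integrable fun u : ℝ => ((2 * π : ℝ) : ℂ) * ftilde (2 * π * u) := h1.const_mul _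
    exact h2.congr (Filter.Eventually.of_forall fun u => (hrel u).symm)
  have hF_int : Integrable (𝓕 g) := by
    have : 𝓕 g = fun u => 𝓕⁻ g (-u) := by
      funext u
      rw [Real.fourierInv_eq_fourier_neg, neg_neg]
    rw [this]
    exact hinv_int.comp_neg
  -- step 3 : Fourier inversion
  have hinv := hgi.fourier_fourierInv_eq hF_int (hgc.continuousAt (x := ω))
  -- step 4 : compute 𝓕 (𝓕⁻ g) ω
  rw [← hinv, Real.fourier_real_eq_integral_exp_smul]
  have : ∀ t : ℝ, Complex.exp (((-2 * π * t * ω : ℝ) : ℂ) * Complex.I) • 𝓕⁻ g t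
      = ((2 * π : ℝ) : ℂ) • ((fun u : ℝ => ftilde u * Complex.exp (-(Complex.I * ω * u)))
          (2 * π * t)) := by
    intro t
    rw [hrel t, smul_eq_mul, smul_eq_mul]
    rw [show (((-2 * π * t * ω : ℝ) : ℂ) * Complex.I)
        = -(Complex.I * ω * ((2 * π * t : ℝ) : ℂ)) by push_cast; ring]
    ring
  simp_rw [this]
  rw [integral_smul, MeasureTheory.Measure.integral_comp_mul_left
    (fun u : ℝ => ftilde u * Complex.exp (-(Complex.I * ω * u))) (2 * π)]
  rw [abs_of_pos (by positivity : (0:ℝ) < (2 * π)⁻¹), Complex.real_smul, smul_eq_mul,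
    ← mul_assoc, show ((2 * π : ℝ) : ℂ) * (((2 * π)⁻¹ : ℝ) : ℂ) = 1 by
      push_cast; exact mul_inv_cancel₀ h2πc,
    one_mul]

lemma key_scalar (s : ℝ) (f : ℝ → ℂ) (hfi : Integrable f)
    (C γ : ℝ) (hC : 0 < C) (hγs : |s| < γ)
    (hfhat : ∀ ω : ℝ, ‖fourierT f ω‖ ≤ C * Real.exp (-γ * |ω|))
    (ftilde : ℝ → ℂ)
    (hft : ∀ t : ℝ, ftilde t
      = (1 / (2 * π) : ℝ) *
        ∫ ω : ℝ, fourierT f ω * Complex.exp (((-(ω * s) : ℝ) : ℂ) + Complex.I * ω * t))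
    (hfti : Integrable ftilde) (ω : ℝ) :
    fourierT ftilde ω = fourierT f ω * Complex.exp ((-(ω * s) : ℝ) : ℂ) := by
  set g : ℝ → ℂ := fun μ => fourierT f μ * Complex.exp ((-(μ * s) : ℝ) : ℂ) with hg
  have hgc : Continuous g := by
    apply (fourierT_continuous hfi).mul
    exact Complex.continuous_exp.comp (by fun_prop)
  have hgi : Integrable g := by
    refine Integrable.mono' (((integrable_exp_neg_mul_abs' (b := γ - |s|)
      (by linarith)).const_mul C)) hgc.aestronglyMeasurable
      (Filter.Eventually.of_forall fun μ => ?_)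
    rw [hg]
    dsimp only
    rw [norm_mul, Complex.norm_exp]
    have h1 : ‖fourierT f μ‖ ≤ C * Real.exp (-γ * |μ|) := hfhat μ
    have h2 : (((-(μ * s) : ℝ) : ℂ)).re = -(μ * s) := by norm_num
    rw [h2]
    have h3 : Real.exp (-(μ * s)) ≤ Real.exp (|s| * |μ|) := by
      apply Real.exp_le_exp.mpr
      calc -(μ * s) ≤ |μ * s| := neg_le_abs _
        _ = |s| * |μ| := by rw [abs_mul]; ring
    calc ‖fourierT f μ‖ * Real.exp (-(μ * s))
        ≤ (C * Real.exp (-γ * |μ|)) * Real.exp (|s| * |μ|) := by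
          exact mul_le_mul h1 h3 (Real.exp_pos _).le
            (mul_nonneg hC.le (Real.exp_pos _).le)
      _ = C * Real.exp (-(γ - |s|) * |μ|) := by
          rw [mul_assoc, ← Real.exp_add]; ring_nf
  have hft' : ∀ t : ℝ, ftilde t
      = (1 / (2 * π) : ℝ) * ∫ μ : ℝ, g μ * Complex.exp (Complex.I * μ * t) := by
    intro t
    rw [hft t]
    congr 1
    refine integral_congr_ae (Filter.Eventually.of_forall fun μ => ?_)
    dsimp only
    rw [Complex.exp_add]
    ring
  have := key_inversion hgc hgi hft' hfti ω
  rw [fourierT]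
  exact this

section Matrices

variable {d : ℕ}

-- exponential of z • H via spectral theorem
lemma mexp_smul_eq (H : Matrix (Fin d) (Fin d) ℂ) (hH : H.IsHermitian) (z : ℂ) :
    mexp (z • H) = (hH.eigenvectorUnitary : Matrix (Fin d) (Fin d) ℂ) *
      Matrix.diagonal (fun i => Complex.exp (z * hH.eigenvalues i)) *
      star (hH.eigenvectorUnitary : Matrix (Fin d) (Fin d) ℂ) := by
  set U : Matrix (Fin d) (Fin d) ℂ := (hH.eigenvectorUnitary : Matrix (Fin d) (Fin d) ℂ)
  have h1 : z • H = U * Matrix.diagonal (fun i => z * (hH.eigenvalues i : ℂ)) * star U := by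
    conv_lhs => rw [hH.spectral_theorem, Unitary.conjStarAlgAut_apply]
    rw [← smul_mul_assoc, ← mul_smul_comm, ← Matrix.diagonal_smul]
    have : (z • RCLike.ofReal ∘ hH.eigenvalues : Fin d → ℂ)
        = fun i => z * (hH.eigenvalues i : ℂ) := by
      funext i
      simp [Function.comp_apply, smul_eq_mul]
    rw [this]
  rw [mexp, h1]
  have hu : U = ((Unitary.toUnits hH.eigenvectorUnitary : (Matrix (Fin d) (Fin d) ℂ)ˣ) :
      Matrix (Fin d) (Fin d) ℂ) := rfl
  have hu' : star U = (((Unitary.toUnits hH.eigenvectorUnitary)⁻¹ :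
      (Matrix (Fin d) (Fin d) ℂ)ˣ) : Matrix (Fin d) (Fin d) ℂ) := by
    simp [hu]
  rw [hu', hu, Matrix.exp_units_conj, Matrix.exp_diagonal]
  congr 2
  funext i
  rw [Pi.exp_def, ← Complex.exp_eq_exp_ℂ]

end Matrices

lemma mexp_star (H : Matrix (Fin d) (Fin d) ℂ) (hH : H.IsHermitian) (t : ℝ) :
    star (mexp ((Complex.I * t) • H)) = mexp ((-(Complex.I * t)) • H) := by
  rw [mexp, mexp]
  have h : ((Complex.I * t) • H)ᴴ = (-(Complex.I * t)) • H := by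
    rw [Matrix.conjTranspose_smul, hH.eq]
    congr 1
    simp [Complex.ext_iff]
  rw [Matrix.star_eq_conjTranspose, ← Matrix.exp_conjTranspose, h]

lemma mexp_unitary (H : Matrix (Fin d) (Fin d) ℂ) (hH : H.IsHermitian) (t : ℝ) :
    mexp ((Complex.I * t) • H) ∈ unitary (Matrix (Fin d) (Fin d) ℂ) := by
  have hstar := mexp_star H hH t
  have hmul : ∀ (z w : ℂ), mexp (z • H) * mexp (w • H) = mexp ((z + w) • H) := by
    intro z w
    rw [mexp, mexp, mexp, ← Matrix.exp_add_of_commute]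
    · rw [add_smul]
    · exact (Commute.refl H).smul_left z |>.smul_right w
  rw [Unitary.mem_iff]
  constructor
  · rw [hstar, hmul]
    simp only [neg_add_cancel, zero_smul]
    rw [mexp, NormedSpace.exp_zero]
  · rw [hstar, hmul]
    simp only [add_neg_cancel, zero_smul]
    rw [mexp, NormedSpace.exp_zero]

lemma mexp_conj_norm_le (H : Matrix (Fin d) (Fin d) ℂ) (hH : H.IsHermitian) (hd : 1 ≤ d) (A : Matrix (Fin d) (Fin d) ℂ)
    (t : ℝ) :
    ‖mexp ((Complex.I * t) • H) * A * mexp ((-(Complex.I * t)) • H)‖ ≤ ‖A‖ := by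
  haveI : Nonempty (Fin d) := Fin.pos_iff_nonempty.mp hd
  haveI : Nontrivial (Matrix (Fin d) (Fin d) ℂ) := by infer_instance
  have h1 : ‖mexp ((Complex.I * t) • H)‖ = 1 :=
    CStarRing.norm_coe_unitary ⟨_, mexp_unitary H hH t⟩
  have h2 : ‖mexp ((-(Complex.I * t)) • H)‖ = 1 := by
    rw [← mexp_star H hH t, Matrix.star_eq_conjTranspose, Matrix.l2_opNorm_conjTranspose, h1]
  have e1 : ‖mexp ((Complex.I * t) • H) * A * mexp ((-(Complex.I * t)) • H)‖
      ≤ ‖mexp ((Complex.I * t) • H) * A‖ * ‖mexp ((-(Complex.I * t)) • H)‖ :=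
    Matrix.l2_opNorm_mul _ _
  have e2 : ‖mexp ((Complex.I * t) • H) * A‖ ≤ ‖mexp ((Complex.I * t) • H)‖ * ‖A‖ :=
    Matrix.l2_opNorm_mul _ _
  rw [h2, mul_one] at e1
  rw [h1, one_mul] at e2
  exact e1.trans e2

set_option maxHeartbeats 1000000 in
lemma mexp_continuous (H : Matrix (Fin d) (Fin d) ℂ) : Continuous (fun t : ℝ => mexp ((Complex.I * t) • H)) := by
  unfold mexp
  haveI : CompleteSpace (Matrix (Fin d) (Fin d) ℂ) := FiniteDimensional.complete ℂ _
  exact (continuous_iff_continuousAt.2 fun x => (NormedSpace.exp_analytic (𝕂 := ℂ) x).continuousAt).comp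
    ((continuous_const.mul Complex.continuous_ofReal).smul continuous_const)

set_option maxHeartbeats 1000000 in
lemma mexp_continuous' (H : Matrix (Fin d) (Fin d) ℂ) : Continuous (fun t : ℝ => mexp ((-(Complex.I * t)) • H)) := by
  unfold mexp
  haveI : CompleteSpace (Matrix (Fin d) (Fin d) ℂ) := FiniteDimensional.complete ℂ _
  exact (continuous_iff_continuousAt.2 fun x => (NormedSpace.exp_analytic (𝕂 := ℂ) x).continuousAt).comp
    (((continuous_const.mul Complex.continuous_ofReal).neg).smul continuous_const)

lemma filtered_integrand_integrable (H : Matrix (Fin d) (Fin d) ℂ) (hH : H.IsHermitian) (hd : 1 ≤ d)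
    (A : Matrix (Fin d) (Fin d) ℂ)
    {g : ℝ → ℂ} (hgc : Continuous g) (hgi : Integrable g) :
    Integrable (fun t : ℝ =>
      g t • (mexp ((Complex.I * t) • H) * A * mexp ((-(Complex.I * t)) • H))) := by
  have hcont : Continuous (fun t : ℝ =>
      g t • (mexp ((Complex.I * t) • H) * A * mexp ((-(Complex.I * t)) • H))) :=
    hgc.smul (((mexp_continuous H).mul continuous_const).mul (mexp_continuous' H))
  refine Integrable.mono' (hgi.norm.mul_const ‖A‖) hcont.aestronglyMeasurable
    (Filter.Eventually.of_forall fun t => ?_)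
  rw [norm_smul]
  exact mul_le_mul_of_nonneg_left (mexp_conj_norm_le H hH hd A t) (norm_nonneg _)

lemma integral_matrix_apply {F : ℝ → Matrix (Fin d) (Fin d) ℂ} (hF : Integrable F) (j k : Fin d) :
    (∫ t, F t) j k = ∫ t, F t j k := by
  let L : Matrix (Fin d) (Fin d) ℂ →L[ℂ] ℂ :=
    LinearMap.toContinuousLinearMap (Matrix.entryLinearMap ℂ ℂ j k)
  have h := L.integral_comp_comm hF
  have h2 : ∀ M : Matrix (Fin d) (Fin d) ℂ, L M = M j k := fun M => rfl
  rw [show (∫ t, F t) j k = L (∫ t, F t) from rfl, ← h]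
  exact integral_congr_ae (Filter.Eventually.of_forall fun t => (h2 (F t)))

lemma mul_integral_mul {F : ℝ → Matrix (Fin d) (Fin d) ℂ} (hF : Integrable F)
    (P Q : Matrix (Fin d) (Fin d) ℂ) :
    P * (∫ t, F t) * Q = ∫ t, P * F t * Q := by
  let L1 : Matrix (Fin d) (Fin d) ℂ →L[ℂ] Matrix (Fin d) (Fin d) ℂ :=
    ContinuousLinearMap.mul ℂ (Matrix (Fin d) (Fin d) ℂ) P
  let L2 : Matrix (Fin d) (Fin d) ℂ →L[ℂ] Matrix (Fin d) (Fin d) ℂ :=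
    (ContinuousLinearMap.mul ℂ (Matrix (Fin d) (Fin d) ℂ)).flip Q
  have h1 : P * (∫ t, F t) = ∫ t, P * F t := (L1.integral_comp_comm hF).symm
  have hF1 : Integrable (fun t => P * F t) := L1.integrable_comp hF
  have h2 : (∫ t, P * F t) * Q = ∫ t, P * F t * Q := (L2.integral_comp_comm hF1).symm
  rw [h1, h2]

lemma scalar_integrand_integrable {g : ℝ → ℂ} (hgc : Continuous g) (hgi : Integrable g) (ω : ℝ) :
    Integrable (fun t : ℝ => g t * Complex.exp (-(Complex.I * ω * t))) := by
  refine Integrable.mono' hgi.norm ((hgc.mul ?_).aestronglyMeasurable)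
    (Filter.Eventually.of_forall fun t => ?_)
  · exact Complex.continuous_exp.comp (by fun_prop)
  · rw [norm_mul, Complex.norm_exp]
    have : (-(Complex.I * ω * t)).re = 0 := by simp
    rw [this, Real.exp_zero, mul_one]

lemma sandwich (u d1 d2 a : Matrix (Fin d) (Fin d) ℂ) (h : star u * u = 1) :
    star u * (u * d1 * star u * a * (u * d2 * star u)) * u = d1 * (star u * a * u) * d2 := by
  simp only [← mul_assoc]
  rw [h, one_mul, mul_assoc, h, mul_one]

lemma filtered_conj (H : Matrix (Fin d) (Fin d) ℂ) (hH : H.IsHermitian) (hd : 1 ≤ d)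
    (A : Matrix (Fin d) (Fin d) ℂ) {g : ℝ → ℂ} (hgc : Continuous g) (hgi : Integrable g)
    (j k : Fin d) :
    (star (hH.eigenvectorUnitary : Matrix (Fin d) (Fin d) ℂ) * filtered H g A *
      (hH.eigenvectorUnitary : Matrix (Fin d) (Fin d) ℂ)) j k
    = fourierT g (hH.eigenvalues k - hH.eigenvalues j) *
      (star (hH.eigenvectorUnitary : Matrix (Fin d) (Fin d) ℂ) * A *
        (hH.eigenvectorUnitary : Matrix (Fin d) (Fin d) ℂ)) j k := by
  have hU2 : star (hH.eigenvectorUnitary : Matrix (Fin d) (Fin d) ℂ) *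
      (hH.eigenvectorUnitary : Matrix (Fin d) (Fin d) ℂ) = 1 :=
    Unitary.coe_star_mul_self hH.eigenvectorUnitary
  have hF := filtered_integrand_integrable H hH hd A hgc hgi
  have step2 : ∀ t : ℝ, star (hH.eigenvectorUnitary : Matrix (Fin d) (Fin d) ℂ) *
        (g t • (mexp ((Complex.I * t) • H) * A * mexp ((-(Complex.I * t)) • H))) *
        (hH.eigenvectorUnitary : Matrix (Fin d) (Fin d) ℂ)
      = g t • (Matrix.diagonal (fun i => Complex.exp ((Complex.I * t) * hH.eigenvalues i)) *
          (star (hH.eigenvectorUnitary : Matrix (Fin d) (Fin d) ℂ) * A *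
            (hH.eigenvectorUnitary : Matrix (Fin d) (Fin d) ℂ)) *
          Matrix.diagonal (fun i => Complex.exp ((-(Complex.I * t)) * hH.eigenvalues i))) := by
    intro t
    rw [mexp_smul_eq H hH (Complex.I * t), mexp_smul_eq H hH (-(Complex.I * t))]
    rw [mul_smul_comm, smul_mul_assoc]
    congr 1
    exact sandwich _ _ _ _ hU2
  have hG : Integrable (fun t => g t • (Matrix.diagonal
        (fun i => Complex.exp ((Complex.I * t) * hH.eigenvalues i)) *
        (star (hH.eigenvectorUnitary : Matrix (Fin d) (Fin d) ℂ) * A *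
          (hH.eigenvectorUnitary : Matrix (Fin d) (Fin d) ℂ)) *
        Matrix.diagonal (fun i => Complex.exp ((-(Complex.I * t)) * hH.eigenvalues i)))) := by
    have := (((ContinuousLinearMap.mul ℂ (Matrix (Fin d) (Fin d) ℂ)).flip
        (hH.eigenvectorUnitary : Matrix (Fin d) (Fin d) ℂ)).comp
      (ContinuousLinearMap.mul ℂ (Matrix (Fin d) (Fin d) ℂ)
        (star (hH.eigenvectorUnitary : Matrix (Fin d) (Fin d) ℂ)))).integrable_comp hF
    refine this.congr (Filter.Eventually.of_forall fun t => ?_)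
    simp only [ContinuousLinearMap.coe_comp', Function.comp_apply,
      ContinuousLinearMap.mul_apply', ContinuousLinearMap.flip_apply]
    exact step2 t
  rw [filtered, mul_integral_mul hF _ _,
    integral_congr_ae (Filter.Eventually.of_forall step2), integral_matrix_apply hG j k]
  have hent : ∀ t : ℝ, (g t • (Matrix.diagonal
        (fun i => Complex.exp ((Complex.I * t) * hH.eigenvalues i)) *
        (star (hH.eigenvectorUnitary : Matrix (Fin d) (Fin d) ℂ) * A *
          (hH.eigenvectorUnitary : Matrix (Fin d) (Fin d) ℂ)) *
        Matrix.diagonal (fun i => Complex.exp ((-(Complex.I * t)) * hH.eigenvalues i)))) j k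
      = (g t * Complex.exp (-(Complex.I * ((hH.eigenvalues k - hH.eigenvalues j : ℝ) : ℂ) * t)))
          * (star (hH.eigenvectorUnitary : Matrix (Fin d) (Fin d) ℂ) * A *
            (hH.eigenvectorUnitary : Matrix (Fin d) (Fin d) ℂ)) j k := by
    intro t
    rw [Matrix.smul_apply, Matrix.mul_diagonal, Matrix.diagonal_mul, smul_eq_mul]
    have hx : Complex.exp ((Complex.I * t) * hH.eigenvalues j) *
          Complex.exp ((-(Complex.I * t)) * hH.eigenvalues k)
        = Complex.exp (-(Complex.I * ((hH.eigenvalues k - hH.eigenvalues j : ℝ) : ℂ) * t)) := by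
      rw [← Complex.exp_add]
      congr 1
      push_cast
      ring
    rw [← hx]
    ring
  simp_rw [hent]
  rw [MeasureTheory.integral_mul_const, fourierT]


/-- imaginary-time conjugation of a filtered operator is again a filtered
operator, with filter given by the shifted Fourier transform, together with the norm bound. -/
theorem smoothed_observable_imaginary_time
    {d : ℕ} (hd : 1 ≤ d) (H A : Matrix (Fin d) (Fin d) ℂ) (hH : H.IsHermitian)
    (s : ℝ) (f : ℝ → ℂ) (hfc : Continuous f) (hfi : Integrable f)
    (C γ : ℝ) (hC : 0 < C) (hγs : |s| < γ)
    (hfhat : ∀ ω : ℝ, ‖fourierT f ω‖ ≤ C * Real.exp (-γ * |ω|))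
    (ftilde : ℝ → ℂ)
    (hft : ∀ t : ℝ, ftilde t
      = (1 / (2 * π) : ℝ) *
        ∫ ω : ℝ, fourierT f ω * Complex.exp (((-(ω * s) : ℝ) : ℂ) + Complex.I * ω * t))
    (hfti : Integrable ftilde) (hftc : Continuous ftilde) :
    mexp ((s : ℂ) • H) * filtered H f A * mexp ((-(s : ℂ)) • H) = filtered H ftilde A ∧
      ‖filtered H ftilde A‖ ≤ ‖A‖ * ∫ t : ℝ, ‖ftilde t‖ := by
  haveI : Nonempty (Fin d) := Fin.pos_iff_nonempty.mp hd
  have hU2 : star (hH.eigenvectorUnitary : Matrix (Fin d) (Fin d) ℂ) *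
      (hH.eigenvectorUnitary : Matrix (Fin d) (Fin d) ℂ) = 1 :=
    Unitary.coe_star_mul_self hH.eigenvectorUnitary
  have hUU : (hH.eigenvectorUnitary : Matrix (Fin d) (Fin d) ℂ) *
      star (hH.eigenvectorUnitary : Matrix (Fin d) (Fin d) ℂ) = 1 :=
    Unitary.coe_mul_star_self hH.eigenvectorUnitary
  have cancel : ∀ X : Matrix (Fin d) (Fin d) ℂ,
      (hH.eigenvectorUnitary : Matrix (Fin d) (Fin d) ℂ) *
        (star (hH.eigenvectorUnitary : Matrix (Fin d) (Fin d) ℂ) * X *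
          (hH.eigenvectorUnitary : Matrix (Fin d) (Fin d) ℂ)) *
        star (hH.eigenvectorUnitary : Matrix (Fin d) (Fin d) ℂ) = X := by
    intro X
    simp only [← mul_assoc]
    rw [hUU, one_mul, mul_assoc, hUU, mul_one]
  constructor
  · -- main identity
    have key : star (hH.eigenvectorUnitary : Matrix (Fin d) (Fin d) ℂ) *
        (mexp ((s : ℂ) • H) * filtered H f A * mexp ((-(s : ℂ)) • H)) *
        (hH.eigenvectorUnitary : Matrix (Fin d) (Fin d) ℂ)
        = star (hH.eigenvectorUnitary : Matrix (Fin d) (Fin d) ℂ) * filtered H ftilde A *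
          (hH.eigenvectorUnitary : Matrix (Fin d) (Fin d) ℂ) := by
      rw [mexp_smul_eq H hH (s : ℂ), mexp_smul_eq H hH (-(s : ℂ)),
        sandwich _ _ _ _ hU2]
      ext j k
      rw [Matrix.mul_diagonal, Matrix.diagonal_mul]
      rw [filtered_conj H hH hd A hfc hfi j k, filtered_conj H hH hd A hftc hfti j k]
      rw [key_scalar s f hfi C γ hC hγs hfhat ftilde hft hfti
        (hH.eigenvalues k - hH.eigenvalues j)]
      have hx : Complex.exp ((s : ℂ) * hH.eigenvalues j) *
            Complex.exp ((-(s : ℂ)) * hH.eigenvalues k)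
          = Complex.exp ((-((hH.eigenvalues k - hH.eigenvalues j) * s) : ℝ) : ℂ) := by
        rw [← Complex.exp_add]
        congr 1
        push_cast
        ring
      calc Complex.exp ((s : ℂ) * hH.eigenvalues j) *
            (fourierT f (hH.eigenvalues k - hH.eigenvalues j) *
              (star (hH.eigenvectorUnitary : Matrix (Fin d) (Fin d) ℂ) * A *
                (hH.eigenvectorUnitary : Matrix (Fin d) (Fin d) ℂ)) j k) *
            Complex.exp ((-(s : ℂ)) * hH.eigenvalues k)
          = (Complex.exp ((s : ℂ) * hH.eigenvalues j) *
              Complex.exp ((-(s : ℂ)) * hH.eigenvalues k)) *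
            fourierT f (hH.eigenvalues k - hH.eigenvalues j) *
              (star (hH.eigenvectorUnitary : Matrix (Fin d) (Fin d) ℂ) * A *
                (hH.eigenvectorUnitary : Matrix (Fin d) (Fin d) ℂ)) j k := by ring
        _ = _ := by rw [hx]; ring
    have := congrArg (fun X => (hH.eigenvectorUnitary : Matrix (Fin d) (Fin d) ℂ) * X *
      star (hH.eigenvectorUnitary : Matrix (Fin d) (Fin d) ℂ)) key
    simpa only [cancel] using this
  · -- norm bound
    have hInt := filtered_integrand_integrable H hH hd A hftc hfti
    calc ‖filtered H ftilde A‖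
        ≤ ∫ t : ℝ, ‖ftilde t • (mexp ((Complex.I * t) • H) * A *
            mexp ((-(Complex.I * t)) • H))‖ := by
          rw [filtered]
          exact norm_integral_le_integral_norm _
      _ ≤ ∫ t : ℝ, ‖ftilde t‖ * ‖A‖ := by
          refine integral_mono hInt.norm (hfti.norm.mul_const ‖A‖) fun t => ?_
          rw [norm_smul]
          exact mul_le_mul_of_nonneg_left (mexp_conj_norm_le H hH hd A t) (norm_nonneg _)
      _ = ‖A‖ * ∫ t : ℝ, ‖ftilde t‖ := by
          rw [MeasureTheory.integral_mul_const, mul_comm]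
end

section
/- Let σ be a positive definite d×d complex matrix and K₁, K₂ d×d complex matrices satisfying K₂ = σ^{1/2} K₁† σ^{−1/2}. Then the completely positive map T′(ρ) = K₁ ρ K₁† + K₂ ρ K₂† satisfies KMS detailed balance with respect to σ, i.e. for all d×d matrices X, Y one has ⟨X, T′†(Y)⟩_{σ,1/2} = ⟨T′†(X), Y⟩_{σ,1/2}, where T′†(X) = K₁† X K₁ + K₂† X K₂. -/
open scoped Matrix.Norms.L2Operator ComplexOrder Classical
open Matrix

noncomputable def Matrix.PosSemidef.sqrt {n : Type*} [Fintype n] [DecidableEq n]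
    {A : Matrix n n ℂ} (hA : A.PosSemidef) : Matrix n n ℂ :=
  hA.1.eigenvectorUnitary.1 * diagonal ((↑) ∘ (√·) ∘ hA.1.eigenvalues) *
    (star hA.1.eigenvectorUnitary : Matrix n n ℂ)

theorem Matrix.PosSemidef.sqrt_isHermitian_aux {n : Type*} [Fintype n] [DecidableEq n]
    {A : Matrix n n ℂ} (hA : A.PosSemidef) : (hA.sqrt)ᴴ = hA.sqrt := by
  simp [Matrix.PosSemidef.sqrt, conjTranspose_mul, diagonal_conjTranspose, Matrix.mul_assoc]
  have hstar : star (Complex.ofReal ∘ (fun x => √x) ∘ hA.1.eigenvalues) =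
      Complex.ofReal ∘ (fun x => √x) ∘ hA.1.eigenvalues := by
    funext i; simp
  rw [hstar, ← Matrix.star_eq_conjTranspose, ← Matrix.star_eq_conjTranspose, star_star]

theorem Matrix.PosSemidef.sqrt_mul_self_aux {n : Type*} [Fintype n] [DecidableEq n]
    {A : Matrix n n ℂ} (hA : A.PosSemidef) : hA.sqrt * hA.sqrt = A := by
  have hU : (star hA.1.eigenvectorUnitary : Matrix n n ℂ) * hA.1.eigenvectorUnitary.1 = 1 :=
    Unitary.coe_star_mul_self _
  have hD : diagonal ((↑) ∘ (√·) ∘ hA.1.eigenvalues) * diagonal ((↑) ∘ (√·) ∘ hA.1.eigenvalues)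
      = diagonal (((↑) : ℝ → ℂ) ∘ hA.1.eigenvalues) := by
    rw [diagonal_mul_diagonal]
    congr 1
    funext i
    simp only [Function.comp_apply]
    rw [← Complex.ofReal_mul, Real.mul_self_sqrt (hA.eigenvalues_nonneg i)]
  conv_rhs => rw [hA.1.spectral_theorem, Unitary.conjStarAlgAut_apply]
  rw [Matrix.PosSemidef.sqrt]
  calc _ = hA.1.eigenvectorUnitary.1 * diagonal ((↑) ∘ (√·) ∘ hA.1.eigenvalues) *
      ((star hA.1.eigenvectorUnitary : Matrix n n ℂ) * hA.1.eigenvectorUnitary.1) *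
      diagonal ((↑) ∘ (√·) ∘ hA.1.eigenvalues) * (star hA.1.eigenvectorUnitary : Matrix n n ℂ) := by
        simp only [Matrix.mul_assoc]
    _ = _ := by rw [hU, Matrix.mul_one, Matrix.mul_assoc _ (diagonal _) (diagonal _), hD]; rfl

/-- Positive semidefinite square root (extended by `0` off the PSD matrices). -/
noncomputable def psdSqrt {d : ℕ} (A : Matrix (Fin d) (Fin d) ℂ) : Matrix (Fin d) (Fin d) ℂ :=
  if h : A.PosSemidef then h.sqrt else 0

/-- The KMS inner product `⟨X, Y⟩_{σ,1/2} = Tr(Xᴴ σ^{1/2} Y σ^{1/2})`, expressed in terms of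
`s = σ^{1/2}`. -/
noncomputable def kmsInner {d : ℕ} (s X Y : Matrix (Fin d) (Fin d) ℂ) : ℂ :=
  (Xᴴ * s * Y * s).trace

/-- if `K₂ = σ^{1/2} K₁ᴴ σ^{-1/2}` then the completely positive map
`T'(ρ) = K₁ρK₁ᴴ + K₂ρK₂ᴴ`, whose Hilbert–Schmidt adjoint is
`T'†(X) = K₁ᴴXK₁ + K₂ᴴXK₂`, satisfies KMS detailed balance with respect to `σ`. -/
theorem kraus_pair_detailed_balance
    {d : ℕ} (σ K₁ K₂ : Matrix (Fin d) (Fin d) ℂ) (hσ : σ.PosDef)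
    (hK₂ : K₂ = psdSqrt σ * K₁ᴴ * (psdSqrt σ)⁻¹) :
    ∀ X Y : Matrix (Fin d) (Fin d) ℂ,
      kmsInner (psdSqrt σ) X (K₁ᴴ * Y * K₁ + K₂ᴴ * Y * K₂)
        = kmsInner (psdSqrt σ) (K₁ᴴ * X * K₁ + K₂ᴴ * X * K₂) Y := by
  intro X Y
  set s := psdSqrt σ with hsdef
  have hs : s = hσ.posSemidef.sqrt := by
    simp [hsdef, psdSqrt, dif_pos hσ.posSemidef]
  have hherm : sᴴ = s := by rw [hs]; exact hσ.posSemidef.sqrt_isHermitian_aux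
  have hss : s * s = σ := by rw [hs]; exact hσ.posSemidef.sqrt_mul_self_aux
  have hunit : IsUnit s.det := by
    have h : IsUnit σ.det := isUnit_iff_ne_zero.mpr (ne_of_gt hσ.det_pos)
    rw [← hss, det_mul] at h
    exact isUnit_of_mul_isUnit_left h
  have hinvherm : (s⁻¹)ᴴ = s⁻¹ := by rw [conjTranspose_nonsing_inv, hherm]
  have hK₁ : K₁ = s * K₂ᴴ * s⁻¹ := by
    rw [hK₂]
    simp only [conjTranspose_mul, hinvherm, hherm, conjTranspose_conjTranspose]
    rw [mul_nonsing_inv_cancel_left _ _ hunit, mul_nonsing_inv_cancel_right _ _ hunit]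
  -- general lemma
  have aux : ∀ L₁ L₂ A B : Matrix (Fin d) (Fin d) ℂ, L₂ = s * L₁ᴴ * s⁻¹ →
      (Aᴴ * s * (L₁ᴴ * B * L₁) * s).trace = ((L₂ᴴ * A * L₂)ᴴ * s * B * s).trace := by
    intro L₁ L₂ A B hL
    subst hL
    simp only [conjTranspose_mul, hinvherm, hherm, conjTranspose_conjTranspose]
    simp only [← Matrix.mul_assoc]
    rw [nonsing_inv_mul_cancel_right _ _ hunit]
    rw [show Aᴴ * s * L₁ᴴ * B * L₁ * s = (Aᴴ * s * L₁ᴴ * B) * (L₁ * s) by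
        simp only [Matrix.mul_assoc],
      trace_mul_comm (Aᴴ * s * L₁ᴴ * B) (L₁ * s),
      show s⁻¹ * L₁ * s * Aᴴ * s * L₁ᴴ * B * s
          = (s⁻¹ * (L₁ * s * Aᴴ * s * L₁ᴴ * B)) * s by simp only [Matrix.mul_assoc],
      trace_mul_comm (s⁻¹ * (L₁ * s * Aᴴ * s * L₁ᴴ * B)) s,
      show s * (s⁻¹ * (L₁ * s * Aᴴ * s * L₁ᴴ * B)) = L₁ * s * Aᴴ * s * L₁ᴴ * B from
        mul_nonsing_inv_cancel_left _ _ hunit]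
    simp only [Matrix.mul_assoc]
  -- now conclude
  simp only [kmsInner, Matrix.mul_add, Matrix.add_mul, trace_add, conjTranspose_add]
  rw [aux K₁ K₂ X Y hK₂, aux K₂ K₁ X Y hK₁]
  ring
end

section
/- Let m : ℝ → ℂ be twice continuously differentiable with m, m′, m″ all integrable on ℝ, and define η(t) := (1/2π) ∫_ℝ m(ν) e^{iνt} dν. Then η is integrable and ∫_ℝ |η(t)| dt ≤ (1/π) ( ∫_ℝ |m(ν)| dν + ∫_ℝ |m″(ν)| dν ). -/
open MeasureTheory Real FourierTransform Set

private theorem hr' : ∀ x : ℝ, 0 ≤ x → x ^ (-2:ℝ) = (x^2)⁻¹ := fun x hx => by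
  rw [Real.rpow_neg hx, Real.rpow_two]

private theorem hIoi' : IntegrableOn (fun t : ℝ => (t^2)⁻¹) (Ioi (1:ℝ)) :=
  (integrableOn_Ioi_rpow_of_lt (a := -2) (by norm_num) one_pos).congr_fun
    (fun x hx => hr' x (zero_lt_one.trans hx).le) measurableSet_Ioi

private theorem iIoi' : ∫ t in Ioi (1:ℝ), (t^2)⁻¹ = 1 := by
  rw [setIntegral_congr_fun measurableSet_Ioi (g := fun x : ℝ => x ^ (-2:ℝ))
    (fun x hx => (hr' x (zero_lt_one.trans hx).le).symm)]
  rw [integral_Ioi_rpow_of_lt (by norm_num) one_pos]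
  norm_num

private theorem hIio' : IntegrableOn (fun t : ℝ => (t^2)⁻¹) (Iio (-1:ℝ)) := by
  have e : MeasurableEmbedding (fun x : ℝ => -x) := (Homeomorph.neg ℝ).measurableEmbedding
  have hmap : Measure.map (fun x : ℝ => -x) (volume.restrict (Ioi (1:ℝ)))
      = volume.restrict (Iio (-1:ℝ)) := by
    rw [show Ioi (1:ℝ) = (fun x : ℝ => -x) ⁻¹' (Iio (-1)) from by ext x; simp [lt_neg],
      ← Measure.restrict_map e.measurable measurableSet_Iio, Measure.map_neg_eq_self]
  rw [IntegrableOn, ← hmap, e.integrable_map_iff]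
  simpa [Function.comp_def, neg_sq, IntegrableOn] using hIoi'

private theorem iIio' : ∫ t in Iio (-1:ℝ), (t^2)⁻¹ = 1 := by
  rw [setIntegral_congr_set Iio_ae_eq_Iic, show (-1:ℝ) = -(1:ℝ) from rfl,
    ← integral_comp_neg_Ioi]
  simpa using iIoi'

private theorem normsmul' (t : ℝ) (z : ℂ) :
    ‖(2*(π:ℂ)*Complex.I*(↑(-(t/(2*π))):ℂ)) • ((2*(π:ℂ)*Complex.I*(↑(-(t/(2*π))):ℂ)) • z)‖
      = t^2 * ‖z‖ := by
  have hπ : (0:ℝ) < π := Real.pi_pos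
  rw [norm_smul, norm_smul, ← mul_assoc]
  have h : ‖(2*(π:ℂ)*Complex.I*(↑(-(t/(2*π))):ℂ))‖ = |t| := by
    simp [norm_mul, abs_div, abs_of_pos hπ]
    field_simp
  rw [h, ← abs_mul, ← sq, abs_of_nonneg (sq_nonneg t)]

/-- Fourier `L¹` estimate: if `m` is twice continuously differentiable with
`m`, `m′`, `m″` integrable, then `η(t) = (1/2π) ∫ m(ν) e^{iνt} dν` is integrable and
`∫ |η| ≤ (1/π)(∫ |m| + ∫ |m″|)`. -/
theorem fourier_L1_estimate
    (m : ℝ → ℂ) (hm : ContDiff ℝ 2 m)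
    (hmi : Integrable m) (hmi' : Integrable (deriv m)) (hmi'' : Integrable (deriv (deriv m))) :
    Integrable (fun t : ℝ => (1 / (2 * π) : ℝ) * ∫ ν : ℝ, m ν * Complex.exp (Complex.I * ν * t)) ∧
      (∫ t : ℝ, ‖(1 / (2 * π) : ℝ) * ∫ ν : ℝ, m ν * Complex.exp (Complex.I * ν * t)‖)
        ≤ (1 / π) * ((∫ ν : ℝ, ‖m ν‖) + ∫ ν : ℝ, ‖deriv (deriv m) ν‖) := by
  have hπ : (0:ℝ) < π := Real.pi_pos
  set A := ∫ ν : ℝ, ‖m ν‖ with hAdef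
  set B := ∫ ν : ℝ, ‖deriv (deriv m) ν‖ with hBdef
  have hA0 : 0 ≤ A := integral_nonneg fun _ => norm_nonneg _
  have hB0 : 0 ≤ B := integral_nonneg fun _ => norm_nonneg _
  set F := fun t : ℝ => ∫ ν : ℝ, m ν * Complex.exp (Complex.I * ν * t) with hFdef
  have hF : ∀ t : ℝ, F t = 𝓕 m (-(t/(2*π))) := by
    intro t
    rw [hFdef]
    simp only
    rw [Real.fourier_real_eq_integral_exp_smul]
    congr 1; ext ν
    rw [smul_eq_mul, mul_comm]
    congr 1
    have h : -2 * π * ν * -(t/(2*π)) = ν * t := by field_simp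
    rw [h]; push_cast; ring
  have hb1 : ∀ t, ‖F t‖ ≤ A := fun t => by
    rw [hF]; exact VectorFourier.norm_fourierIntegral_le_integral_norm _ _ _ _ _
  have hd1 : Differentiable ℝ m := hm.differentiable (by norm_num)
  have hd2 : Differentiable ℝ (deriv m) := by
    have h2 : ContDiff ℝ ((1:ℕ) + 1) m := by exact_mod_cast hm
    rw [contDiff_succ_iff_deriv] at h2
    exact h2.2.2.differentiable (by norm_num)
  have hf' := Real.fourier_deriv hmi hd1 hmi'
  have hf'' := Real.fourier_deriv hmi' hd2 hmi''
  have hb2 : ∀ t : ℝ, t^2 * ‖F t‖ ≤ B := fun t => by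
    have h1 : ‖𝓕 (deriv (deriv m)) (-(t/(2*π)))‖ ≤ B :=
      VectorFourier.norm_fourierIntegral_le_integral_norm _ _ _ _ _
    rw [hf''] at h1
    simp only [hf'] at h1
    rw [normsmul' t (𝓕 m (-(t/(2*π)))), ← hF] at h1
    exact h1
  have hFc : Continuous F := by
    have h : Continuous (𝓕 m) := VectorFourier.fourierIntegral_continuous
      Real.continuous_fourierChar (by exact continuous_inner) hmi
    have hc2 : Continuous fun t : ℝ => -(t/(2*π)) := by fun_prop
    have h2 : Continuous fun t : ℝ => 𝓕 m (-(t/(2*π))) := h.comp hc2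
    rw [show F = fun t : ℝ => 𝓕 m (-(t/(2*π))) from funext hF]
    exact h2
  have hcompl : (Icc (-1:ℝ) 1)ᶜ = Iio (-1) ∪ Ioi 1 := by
    ext x
    simp only [mem_compl_iff, mem_Icc, not_and_or, not_le, mem_union, mem_Iio, mem_Ioi]
  have hFb : ∀ t ∈ (Icc (-1:ℝ) 1)ᶜ, ‖F t‖ ≤ B * (t^2)⁻¹ := by
    intro t ht
    rw [mem_compl_iff, mem_Icc, not_and_or, not_le, not_le] at ht
    have htne : t ≠ 0 := by rcases ht with h|h <;> intro h0 <;> rw [h0] at h <;> linarith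
    have ht2 : 0 < t^2 := by positivity
    have := hb2 t
    calc ‖F t‖ = (t^2 * ‖F t‖) / t^2 := by field_simp
    _ ≤ B / t^2 := by gcongr
    _ = B * (t^2)⁻¹ := div_eq_mul_inv _ _
  have hgc : IntegrableOn (fun t : ℝ => (t^2)⁻¹) (Icc (-1:ℝ) 1)ᶜ := by
    rw [hcompl]; exact hIio'.union hIoi'
  have hFint : Integrable F := by
    rw [← integrableOn_univ, ← Set.union_compl_self (Icc (-1:ℝ) 1)]
    refine IntegrableOn.union (hFc.integrableOn_Icc) ?_
    refine Integrable.mono' (hgc.const_mul B) (hFc.aestronglyMeasurable.restrict) ?_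
    rw [ae_restrict_iff' measurableSet_Icc.compl]
    exact Filter.Eventually.of_forall hFb
  have hηint : Integrable (fun t : ℝ => ((1/(2*π):ℝ):ℂ) * F t) := hFint.const_mul _
  refine ⟨hηint, ?_⟩
  have hnorm : ∀ t : ℝ, ‖((1/(2*π):ℝ):ℂ) * F t‖ = (1/(2*π)) * ‖F t‖ := fun t => by
    rw [norm_mul, Complex.norm_real, Real.norm_eq_abs, abs_of_pos (by positivity)]
  have hdisj : Disjoint (Iio (-1:ℝ)) (Ioi (1:ℝ)) := by
    rw [Set.disjoint_left]; intro x hx hx'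
    exact absurd (mem_Ioi.1 hx') (by linarith [mem_Iio.1 hx])
  have hsplit := integral_add_compl measurableSet_Icc (s := Icc (-1:ℝ) 1) hηint.norm
  have h1 : (∫ t in Icc (-1:ℝ) 1, ‖((1/(2*π):ℝ):ℂ) * F t‖)
      ≤ 2 * ((1/(2*π)) * A) := by
    have : (∫ t in Icc (-1:ℝ) 1, ‖((1/(2*π):ℝ):ℂ) * F t‖)
        ≤ ∫ _ in Icc (-1:ℝ) 1, (1/(2*π)) * A := by
      refine setIntegral_mono_on hηint.norm.integrableOn
        (integrableOn_const measure_Icc_lt_top.ne) measurableSet_Icc ?_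
      intro t _
      rw [hnorm]
      exact mul_le_mul_of_nonneg_left (hb1 t) (by positivity)
    refine this.trans_eq ?_
    rw [setIntegral_const, measureReal_def, Real.volume_Icc, smul_eq_mul]
    norm_num
  have h2 : (∫ t in (Icc (-1:ℝ) 1)ᶜ, ‖((1/(2*π):ℝ):ℂ) * F t‖)
      ≤ (1/(2*π)) * (B * 2) := by
    have step : (∫ t in (Icc (-1:ℝ) 1)ᶜ, ‖((1/(2*π):ℝ):ℂ) * F t‖)
        ≤ ∫ t in (Icc (-1:ℝ) 1)ᶜ, (1/(2*π)) * (B * (t^2)⁻¹) := by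
      refine setIntegral_mono_on hηint.norm.integrableOn
        (((hgc.const_mul B).const_mul _)) measurableSet_Icc.compl ?_
      intro t ht
      rw [hnorm]
      exact mul_le_mul_of_nonneg_left (hFb t ht) (by positivity)
    refine step.trans_eq ?_
    rw [integral_const_mul, integral_const_mul]
    congr 1; congr 1
    rw [hcompl, setIntegral_union hdisj measurableSet_Ioi hIio' hIoi', iIio', iIoi']
    norm_num
  calc (∫ t : ℝ, ‖((1/(2*π):ℝ):ℂ) * F t‖)
      = (∫ t in Icc (-1:ℝ) 1, ‖((1/(2*π):ℝ):ℂ) * F t‖)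
        + ∫ t in (Icc (-1:ℝ) 1)ᶜ, ‖((1/(2*π):ℝ):ℂ) * F t‖ := hsplit.symm
    _ ≤ 2 * ((1/(2*π)) * A) + (1/(2*π)) * (B * 2) := add_le_add h1 h2
    _ = (1/π) * (A + B) := by field_simp
end
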